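/- If X is a star-K-Scheepers space and Y is a σ-compact space, then X × Y is star-K-Scheepers. -/
import Mathlib


open Set

/-- Star of a set `A` with respect to a family `P`: `St(A,P) = ⋃{B ∈ P : A ∩ B ≠ ∅}`. -/
def st {X : Type*} (A : Set X) (P : Set (Set X)) : Set X :=
  ⋃₀ {B | B ∈ P ∧ (A ∩ B).Nonempty}

/-- `U` is an open cover of the space. -/
def IsOpenCover {X : Type*} [TopologicalSpace X] (U : Set (Set X)) : Prop :=
  (∀ V ∈ U, IsOpen V) ∧ ⋃₀ U = Set.univ

/-- An ω-cover: an open cover such that every finite subset lies in some member. -/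
def IsOmegaCover {X : Type*} [TopologicalSpace X] (U : Set (Set X)) : Prop :=
  IsOpenCover U ∧ ∀ F : Set X, F.Finite → ∃ V ∈ U, F ⊆ V

/-- The star-K-Scheepers property. -/
def StarKScheepers (X : Type*) [TopologicalSpace X] : Prop :=
  ∀ U : ℕ → Set (Set X), (∀ n, IsOpenCover (U n)) →
    ∃ K : ℕ → Set X, (∀ n, IsCompact (K n)) ∧
      IsOmegaCover {S | ∃ n, S = st (K n) (U n)}

/-- Auxiliary cover of `X` obtained from an open cover `U` of `X × Y` and a compact `C ⊆ Y`:
open sets `V` admitting a finite `G ⊆ U` covering `V ×ˢ C` and such that every member of `G`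
meets every vertical slice `{a} ×ˢ C` for `a ∈ V`. -/
def tubeCover {X Y : Type*} [TopologicalSpace X] [TopologicalSpace Y]
    (U : Set (Set (X × Y))) (C : Set Y) : Set (Set X) :=
  {V | IsOpen V ∧ ∃ G : Set (Set (X × Y)), G ⊆ U ∧ G.Finite ∧
    (V ×ˢ C) ⊆ ⋃₀ G ∧ ∀ W ∈ G, V ⊆ Prod.fst '' (W ∩ (univ ×ˢ C))}

theorem tubeCover_isOpenCover {X Y : Type*} [TopologicalSpace X] [TopologicalSpace Y]
    {U : Set (Set (X × Y))} {C : Set Y} (hU : IsOpenCover U) (hC : IsCompact C) :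
    IsOpenCover (tubeCover U C) := by
  constructor
  · exact fun V hV => hV.1
  · apply eq_univ_of_forall
    intro x
    -- the compact slice {x} ×ˢ C
    have hslice : IsCompact (({x} : Set X) ×ˢ C) := isCompact_singleton.prod hC
    have hcov : (({x} : Set X) ×ˢ C) ⊆ ⋃ W : U, (W : Set (X × Y)) := by
      intro p _
      have hp : p ∈ ⋃₀ U := by rw [hU.2]; trivial
      rcases hp with ⟨W, hW, hpW⟩
      exact mem_iUnion.2 ⟨⟨W, hW⟩, hpW⟩
    rcases hslice.elim_finite_subcover (fun W : U => (W : Set (X × Y)))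
        (fun W => hU.1 W W.2) hcov with ⟨t, ht⟩
    -- refine to members meeting the slice
    set G : Set (Set (X × Y)) :=
      {W | W ∈ ((↑) '' (t : Set U) : Set (Set (X × Y))) ∧
        (W ∩ (({x} : Set X) ×ˢ C)).Nonempty} with hGdef
    have hGU : G ⊆ U := by
      rintro W ⟨⟨W', _, rfl⟩, _⟩; exact W'.2
    have hGfin : G.Finite := by
      apply Set.Finite.subset (Set.Finite.image _ (t : Set U).toFinite)
      exact fun W hW => hW.1
    have hGcov : (({x} : Set X) ×ˢ C) ⊆ ⋃₀ G := by
      intro p hp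
      rcases mem_iUnion₂.1 (ht hp) with ⟨W, hWt, hpW⟩
      exact ⟨W, ⟨⟨W, hWt, rfl⟩, ⟨p, hpW, hp⟩⟩, hpW⟩
    have hGopen : IsOpen (⋃₀ G) := isOpen_sUnion fun W hW => hU.1 W (hGU hW)
    -- tube lemma
    rcases generalized_tube_lemma isCompact_singleton hC hGopen hGcov with
      ⟨u, v, hu, _, hxu, hCv, huv⟩
    -- for each member of G, an open nbhd of x inside the fst-image
    have hO : ∀ W ∈ G, ∃ O : Set X, IsOpen O ∧ x ∈ O ∧
        O ⊆ Prod.fst '' (W ∩ (univ ×ˢ C)) := by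
      intro W hW
      rcases hW.2 with ⟨p, hpW, hpx, hpC⟩
      have hx1 : p.1 = x := hpx
      have hWopen : IsOpen W := hU.1 W (hGU hW)
      rcases isOpen_prod_iff.1 hWopen p.1 p.2 hpW with ⟨O₁, O₂, hO₁, hO₂, h1, h2, hsub⟩
      refine ⟨O₁, hO₁, hx1 ▸ h1, ?_⟩
      intro a ha
      exact ⟨(a, p.2), ⟨hsub ⟨ha, h2⟩, ⟨trivial, hpC⟩⟩, rfl⟩
    choose! O hOopen hOx hOsub using hO
    refine ⟨u ∩ ⋂ W ∈ G, O W, ⟨?_, G, hGU, hGfin, ?_, ?_⟩, hxu rfl, ?_⟩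
    · exact hu.inter (hGfin.isOpen_biInter fun W hW => hOopen W hW)
    · intro p hp
      have : p ∈ u ×ˢ v := ⟨hp.1.1, hCv hp.2⟩
      exact huv this
    · intro W hW a ha
      exact hOsub W hW (mem_iInter₂.1 ha.2 W hW)
    · exact mem_iInter₂.2 fun W hW => hOx W hW

theorem tubeCover_star {X Y : Type*} [TopologicalSpace X] [TopologicalSpace Y]
    {U : Set (Set (X × Y))} {C : Set Y} {K : Set X} {a : X} {y : Y}
    (ha : a ∈ st K (tubeCover U C)) (hy : y ∈ C) :
    (a, y) ∈ st (K ×ˢ C) U := by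
  rcases ha with ⟨V, ⟨⟨hVopen, G, hGU, _, hGcov, hGmeet⟩, k, hkK, hkV⟩, haV⟩
  rcases hGcov (show (a, y) ∈ V ×ˢ C from ⟨haV, hy⟩) with ⟨W, hWG, hW⟩
  rcases hGmeet W hWG hkV with ⟨p, ⟨hpW, _, hpC⟩, hpk⟩
  exact ⟨W, ⟨hGU hWG, ⟨p, ⟨hpk ▸ hkK, hpC⟩, hpW⟩⟩, hW⟩

/-- The product of a star-K-Scheepers space with a σ-compact space is star-K-Scheepers. -/
theorem starKScheepers_prod_sigmaCompact {X Y : Type*} [TopologicalSpace X]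
    [TopologicalSpace Y] [SigmaCompactSpace Y] (hX : StarKScheepers X) :
    StarKScheepers (X × Y) := by
  intro U hU
  set C : ℕ → Set Y := compactCovering Y with hC
  -- for each m, apply star-K-Scheepers of X to the tube covers along the m-th row
  have hrow : ∀ m : ℕ, ∃ K : ℕ → Set X, (∀ j, IsCompact (K j)) ∧
      IsOmegaCover {S | ∃ j, S = st (K j) (tubeCover (U (Nat.pair m j)) (C m))} := by
    intro m
    exact hX (fun j => tubeCover (U (Nat.pair m j)) (C m))
      (fun j => tubeCover_isOpenCover (hU _) (isCompact_compactCovering Y m))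
  choose Km hKmc hKm using hrow
  refine ⟨fun n => Km n.unpair.1 n.unpair.2 ×ˢ C n.unpair.1,
    fun n => (hKmc _ _).prod (isCompact_compactCovering Y _), ?_⟩
  have hst_open : ∀ n, IsOpen (st (Km n.unpair.1 n.unpair.2 ×ˢ C n.unpair.1) (U n)) :=
    fun n => isOpen_sUnion fun W hW => (hU n).1 W hW.1
  -- the ω-property
  have homega : ∀ F : Set (X × Y), F.Finite →
      ∃ n, F ⊆ st (Km n.unpair.1 n.unpair.2 ×ˢ C n.unpair.1) (U n) := by
    intro F hF
    -- find m with snd '' F ⊆ C m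
    have hm : ∃ m, ∀ p ∈ F, p.2 ∈ C m := by
      have : ∀ p : X × Y, p ∈ F → ∃ m, p.2 ∈ C m := fun p _ =>
        exists_mem_compactCovering p.2
      choose! f hf using this
      rcases (hF.image f).bddAbove with ⟨m, hmub⟩
      exact ⟨m, fun p hp =>
        compactCovering_subset Y (hmub (Set.mem_image_of_mem f hp)) (hf p hp)⟩
    rcases hm with ⟨m, hm⟩
    rcases (hKm m).2 (Prod.fst '' F) (hF.image _) with ⟨S, ⟨j, rfl⟩, hFS⟩
    refine ⟨Nat.pair m j, ?_⟩
    intro p hp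
    have h1 : p.1 ∈ st (Km m j) (tubeCover (U (Nat.pair m j)) (C m)) :=
      hFS ⟨p, hp, rfl⟩
    have h2 := tubeCover_star h1 (hm p hp)
    simpa [Nat.unpair_pair] using h2
  refine ⟨⟨fun S hS => ?_, ?_⟩, ?_⟩
  · rcases hS with ⟨n, rfl⟩; exact hst_open n
  · apply eq_univ_of_forall
    intro p
    rcases homega {p} (finite_singleton p) with ⟨n, hn⟩
    exact ⟨_, ⟨n, rfl⟩, hn rfl⟩
  · intro F hF
    rcases homega F hF with ⟨n, hn⟩
    exact ⟨_, ⟨n, rfl⟩, hn⟩
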